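/- Let (W,S) be a right-angled Coxeter system and let s₀ ∈ S be such that o(s₀s) = ∞ for every s ∈ S \ {s₀}. Then W^{{s₀}} = {w ∈ W : S(w) = {s₀}} is quasi-dense in W with respect to the word metric. -/

import Mathlib

namespace RACGNF

open List

variable {G : Type*} [Group G]

/-- All entries except possibly the last one are nontrivial. -/
def Valid (l : List G) : Prop := ∀ i : ℕ, (h : i + 1 < l.length) → l[i]'(Nat.lt_of_succ_lt h) ≠ 1

/-- Normal form states: `(u, l)` represents `vₖ s₀ ⋯ v₁ s₀ u`. -/
abbrev Z (G : Type*) [Group G] := G × {l : List G // Valid l}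

lemma valid_nil : Valid ([] : List G) := by intro i h; simp at h

lemma valid_tail {l : List G} (h : Valid l) : Valid l.tail := by
  intro i hi
  cases l with
  | nil => simp at hi
  | cons a l' =>
    simp only [List.tail_cons] at hi ⊢
    have := h (i+1) (by simpa using Nat.succ_lt_succ hi)
    simpa using this

lemma valid_cons {u : G} {l : List G} (hl : Valid l) (hu : l ≠ [] → u ≠ 1) :
    Valid (u :: l) := by
  intro i hi
  cases i with
  | zero =>
    simp only [List.getElem_cons_zero]
    apply hu
    intro hnil
    subst hnil
    simp at hi
  | succ j =>
    simp only [List.getElem_cons_succ]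
    exact hl j (by simpa using Nat.lt_of_succ_lt_succ hi)

/-- Right multiplication on the final syllable. -/
def aE (v : G) : Equiv.Perm (Z G) where
  toFun z := (z.1 * v, z.2)
  invFun z := (z.1 * v⁻¹, z.2)
  left_inv z := by simp [Z]
  right_inv z := by simp [Z]

lemma aE_mul (v w : G) : (aE v) * (aE w) = aE (w * v) := by
  ext z <;> simp [aE, Equiv.Perm.mul_apply, mul_assoc]

lemma aE_one : (aE (1 : G)) = 1 := by
  ext z <;> simp [aE]

lemma aE_pow (v : G) (n : ℕ) : (aE v) ^ n = aE (v ^ n) := by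
  induction n with
  | zero => simp [aE_one]
  | succ k ih =>
      rw [pow_succ, ih, aE_mul, ← pow_succ']

open scoped Classical in
/-- The action of the extra involution `s₀`. -/
noncomputable def bF : Z G → Z G := fun z =>
  if h : z.1 = 1 ∧ z.2.1 ≠ [] then
    (z.2.1.head h.2, ⟨z.2.1.tail, valid_tail z.2.2⟩)
  else
    (1, ⟨z.1 :: z.2.1, valid_cons z.2.2 (fun hl => by
      intro hu; exact h ⟨hu, hl⟩)⟩)

lemma bF_pos (z : Z G) (h : z.1 = 1 ∧ z.2.1 ≠ []) :
    bF z = (z.2.1.head h.2, ⟨z.2.1.tail, valid_tail z.2.2⟩) := by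
  rw [bF, dif_pos h]

lemma bF_neg (z : Z G) (h : ¬ (z.1 = 1 ∧ z.2.1 ≠ [])) :
    bF z = (1, ⟨z.1 :: z.2.1, valid_cons z.2.2 (fun hl hu => h ⟨hu, hl⟩)⟩) := by
  rw [bF, dif_neg h]

lemma bF_bF (z : Z G) : bF (bF z) = z := by
  classical
  obtain ⟨u, l, hl⟩ := z
  by_cases h : u = 1 ∧ l ≠ []
  · rw [bF_pos (u, ⟨l, hl⟩) h]
    obtain ⟨hu, hne⟩ := h
    subst hu
    cases l with
    | nil => exact absurd rfl hne
    | cons v l' =>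
      have hv : ¬ (v = 1 ∧ l' ≠ []) := by
        rintro ⟨hv, hl'⟩
        exact hl 0 (by simpa using List.length_pos_iff.mpr hl') (by simpa using hv)
      rw [bF_neg _ (by simpa using hv)]
      simp
  · rw [bF_neg (u, ⟨l, hl⟩) h, bF_pos _ ⟨rfl, by simp⟩]
    simp

noncomputable def bE : Equiv.Perm (Z G) := ⟨bF, bF, bF_bF, bF_bF⟩

section Eval

variable {W : Type*} [Group W] (φ : G →* W) (x : W)

/-- Evaluation of the list part. -/
def evalL : List G → W
  | [] => 1
  | v :: l => evalL l * φ v * x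

def eval (z : Z G) : W := evalL φ x z.2.1 * φ z.1

lemma eval_aE (v : G) (z : Z G) : eval φ x (aE v z) = eval φ x z * φ v := by
  simp [eval, aE, mul_assoc]

lemma eval_bF (hx : x * x = 1) (z : Z G) : eval φ x (bF z) = eval φ x z * x := by
  classical
  obtain ⟨u, l, hl⟩ := z
  by_cases h : u = 1 ∧ l ≠ []
  · rw [bF_pos (u, ⟨l, hl⟩) h]
    obtain ⟨hu, hne⟩ := h
    subst hu
    cases l with
    | nil => exact absurd rfl hne
    | cons v l' =>
      simp [eval, evalL, mul_assoc, hx]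
  · rw [bF_neg (u, ⟨l, hl⟩) h]
    simp [eval, evalL, mul_assoc]

end Eval

section Len

variable (lenG : G → ℕ)

def fZ (z : Z G) : ℕ := lenG z.1 + (z.2.1.map (fun v => lenG v + 1)).sum

lemma fZ_aE (v : G) (z : Z G) :
    fZ lenG (aE v z) = lenG (z.1 * v) + (z.2.1.map (fun v => lenG v + 1)).sum := rfl

lemma fZ_bF_pos (h1 : lenG (1 : G) = 0) (z : Z G) (h : z.1 = 1 ∧ z.2.1 ≠ []) :
    fZ lenG (bF z) + 1 = fZ lenG z := by
  classical
  obtain ⟨u, l, hl⟩ := z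
  obtain ⟨hu, hne⟩ := h
  subst hu
  rw [bF_pos _ ⟨rfl, hne⟩]
  cases l with
  | nil => exact absurd rfl hne
  | cons v l' => simp [fZ, h1]; ring

lemma fZ_bF_neg (h1 : lenG (1 : G) = 0) (z : Z G) (h : ¬ (z.1 = 1 ∧ z.2.1 ≠ [])) :
    fZ lenG (bF z) = fZ lenG z + 1 := by
  classical
  rw [bF_neg _ h]
  simp [fZ, h1]
  ring

end Len

end RACGNF
namespace RACGMain

open RACGNF CoxeterSystem

variable {B : Type*}

/-- The Coxeter matrix restricted to the complement of `s₀`. -/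
def Mres (M : CoxeterMatrix B) (s₀ : B) : CoxeterMatrix {t : B // t ≠ s₀} where
  M := Matrix.of fun a b => M a.1 b.1
  isSymm := by
    ext a b
    exact M.symmetric b.1 a.1
  diagonal i := M.diagonal i.1
  off_diagonal i i' h := M.off_diagonal i.1 i'.1 (fun hc => h (Subtype.ext hc))

@[simp] lemma Mres_apply (M : CoxeterMatrix B) (s₀ : B) (a b : {t : B // t ≠ s₀}) :
    Mres M s₀ a b = M a.1 b.1 := rfl

variable {W : Type*} [Group W] {M : CoxeterMatrix B} (cs : CoxeterSystem M W) (s₀ : B)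

/-- The Coxeter system of the restricted matrix on its canonical group. -/
def csres : CoxeterSystem (Mres M s₀) (Mres M s₀).Group := (Mres M s₀).toCoxeterSystem

/-- The canonical map from the restricted Coxeter group to `W`. -/
def iota : (Mres M s₀).Group →* W :=
  (csres (M := M) s₀).lift ⟨fun a => cs.simple a.1, fun i i' => by
    simpa using cs.simple_mul_simple_pow i.1 i'.1⟩

@[simp] lemma iota_simple (a : {t : B // t ≠ s₀}) :
    iota cs s₀ ((csres (M := M) s₀).simple a) = cs.simple a.1 :=
  lift_apply_simple _ _ a

open scoped Classical in
/-- The generator images in `Perm (Z _)`. -/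
noncomputable def permOf (i : B) : Equiv.Perm (Z (Mres M s₀).Group) :=
  if h : i = s₀ then bE else aE ((csres (M := M) s₀).simple ⟨i, h⟩)

variable (hM0 : ∀ t : B, t ≠ s₀ → M s₀ t = 0)

include hM0 in
lemma permOf_liftable : CoxeterMatrix.IsLiftable M (permOf (M := M) s₀) := by
  intro i i'
  by_cases hi : i = s₀ <;> by_cases hi' : i' = s₀
  · subst hi; subst hi'
    rw [M.diagonal, pow_one, permOf, dif_pos rfl]
    ext z : 1
    exact bF_bF z
  · subst hi
    rw [hM0 i' hi', pow_zero]
  · subst hi'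
    rw [M.symmetric, hM0 i hi, pow_zero]
  · rw [permOf, dif_neg hi, permOf, dif_neg hi', aE_mul, aE_pow]
    have h := (csres (M := M) s₀).simple_mul_simple_pow' ⟨i, hi⟩ ⟨i', hi'⟩
    rw [Mres_apply] at h
    rw [h, aE_one]

/-- The homomorphism `W →* Perm (Z _)`. -/
noncomputable def Phi : W →* Equiv.Perm (Z (Mres M s₀).Group) :=
  cs.lift ⟨permOf (M := M) s₀, permOf_liftable s₀ hM0⟩

@[simp] lemma Phi_simple (i : B) :
    Phi cs s₀ hM0 (cs.simple i) = permOf (M := M) s₀ i :=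
  lift_apply_simple _ _ i

/-- The base state. -/
def z0 : Z (Mres M s₀).Group := (1, ⟨[], valid_nil⟩)

/-- The normal-form state of `w`. -/
noncomputable def st (w : W) : Z (Mres M s₀).Group := Phi cs s₀ hM0 w⁻¹ (z0 (M := M) s₀)

lemma st_mul_simple (w : W) (i : B) :
    st cs s₀ hM0 (w * cs.simple i) = permOf (M := M) s₀ i (st cs s₀ hM0 w) := by
  rw [st, mul_inv_rev, cs.inv_simple, map_mul, Equiv.Perm.mul_apply, Phi_simple, st]

lemma eval_Phi (w : W) (z : Z (Mres M s₀).Group) :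
    eval (iota cs s₀) (cs.simple s₀) (Phi cs s₀ hM0 w z)
      = eval (iota cs s₀) (cs.simple s₀) z * w⁻¹ := by
  induction w using cs.simple_induction generalizing z with
  | simple i =>
    rw [Phi_simple, cs.inv_simple, permOf]
    by_cases h : i = s₀
    · rw [dif_pos h, h]
      exact eval_bF _ _ (cs.simple_mul_simple_self s₀) z
    · rw [dif_neg h]
      rw [show (aE ((csres (M := M) s₀).simple ⟨i, h⟩) : Equiv.Perm _) z
            = aE ((csres (M := M) s₀).simple ⟨i, h⟩) z from rfl]
      rw [eval_aE, iota_simple]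
  | one => simp
  | mul w₁ w₂ h₁ h₂ =>
    rw [map_mul, Equiv.Perm.mul_apply, h₁, h₂, mul_inv_rev, mul_assoc]

lemma eval_st (w : W) :
    eval (iota cs s₀) (cs.simple s₀) (st cs s₀ hM0 w) = w := by
  rw [st, eval_Phi, inv_inv]
  have : eval (iota cs s₀) (cs.simple s₀) (z0 (M := M) s₀) = 1 := by
    simp [eval, evalL, z0]
  rw [this, one_mul]

lemma iota_wordProd (ω : List {t : B // t ≠ s₀}) :
    iota cs s₀ ((csres (M := M) s₀).wordProd ω) = cs.wordProd (ω.map Subtype.val) := by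
  induction ω with
  | nil => simp [wordProd_nil]
  | cons a ω ih => rw [wordProd_cons, map_mul, iota_simple, List.map_cons, wordProd_cons, ih]

lemma length_iota (u : (Mres M s₀).Group) :
    cs.length (iota cs s₀ u) ≤ (csres (M := M) s₀).length u := by
  obtain ⟨ω, hlen, rfl⟩ := (csres (M := M) s₀).exists_reduced_word u
  rw [iota_wordProd]
  calc cs.length (cs.wordProd (ω.map Subtype.val)) ≤ (ω.map Subtype.val).length :=
        cs.length_wordProd_le _
    _ = ω.length := List.length_map _
    _ = _ := hlen.symm

lemma length_evalL (l : List (Mres M s₀).Group) :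
    cs.length (evalL (iota cs s₀) (cs.simple s₀) l)
      ≤ (l.map (fun v => (csres (M := M) s₀).length v + 1)).sum := by
  induction l with
  | nil => simp [evalL]
  | cons v l ih =>
    rw [evalL]
    calc cs.length (evalL (iota cs s₀) (cs.simple s₀) l * iota cs s₀ v * cs.simple s₀)
        ≤ cs.length (evalL (iota cs s₀) (cs.simple s₀) l * iota cs s₀ v)
            + cs.length (cs.simple s₀) := cs.length_mul_le _ _
      _ ≤ cs.length (evalL (iota cs s₀) (cs.simple s₀) l) + cs.length (iota cs s₀ v) + 1 := by
            rw [cs.length_simple]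
            exact Nat.add_le_add_right (cs.length_mul_le _ _) 1
      _ ≤ (l.map (fun v => (csres (M := M) s₀).length v + 1)).sum
            + ((csres (M := M) s₀).length v + 1) := by
            have := length_iota cs s₀ v
            omega
      _ = _ := by rw [List.map_cons, List.sum_cons]; ring

/-- The weight of a state. -/
noncomputable def wt (z : Z (Mres M s₀).Group) : ℕ := fZ (csres (M := M) s₀).length z

lemma length_eval (z : Z (Mres M s₀).Group) :
    cs.length (eval (iota cs s₀) (cs.simple s₀) z) ≤ wt (M := M) s₀ z := by
  rw [eval, wt, fZ]
  calc cs.length (evalL (iota cs s₀) (cs.simple s₀) z.2.1 * iota cs s₀ z.1)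
      ≤ cs.length (evalL (iota cs s₀) (cs.simple s₀) z.2.1) + cs.length (iota cs s₀ z.1) :=
        cs.length_mul_le _ _
    _ ≤ _ := by
        have h1 := length_evalL cs s₀ z.2.1
        have h2 := length_iota cs s₀ z.1
        omega

lemma wt_permOf_le (i : B) (z : Z (Mres M s₀).Group) :
    wt (M := M) s₀ (permOf (M := M) s₀ i z) ≤ wt (M := M) s₀ z + 1 := by
  rw [permOf]
  by_cases h : i = s₀
  · rw [dif_pos h]
    show wt (M := M) s₀ (bF z) ≤ wt (M := M) s₀ z + 1
    by_cases hc : z.1 = 1 ∧ z.2.1 ≠ []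
    · have := fZ_bF_pos (csres (M := M) s₀).length (by simp) z hc
      rw [wt, wt]
      omega
    · have := fZ_bF_neg (csres (M := M) s₀).length (by simp) z hc
      rw [wt, wt]
      omega
  · rw [dif_neg h]
    show wt (M := M) s₀ (aE _ z) ≤ wt (M := M) s₀ z + 1
    rw [wt, wt, fZ_aE, fZ]
    have h1 : (csres (M := M) s₀).length (z.1 * (csres (M := M) s₀).simple ⟨i, h⟩)
        ≤ (csres (M := M) s₀).length z.1 + 1 := by
      have := (csres (M := M) s₀).length_mul_le z.1 ((csres (M := M) s₀).simple ⟨i, h⟩)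
      rw [(csres (M := M) s₀).length_simple] at this
      exact this
    omega

lemma wt_wordProd_le (ω : List B) :
    wt (M := M) s₀ (Phi cs s₀ hM0 (cs.wordProd ω) (z0 (M := M) s₀)) ≤ ω.length := by
  induction ω with
  | nil => simp [wordProd_nil, wt, fZ, z0]
  | cons i ω ih =>
    rw [wordProd_cons, map_mul, Equiv.Perm.mul_apply, Phi_simple, List.length_cons]
    calc wt (M := M) s₀ (permOf (M := M) s₀ i (Phi cs s₀ hM0 (cs.wordProd ω) (z0 (M := M) s₀)))
        ≤ wt (M := M) s₀ (Phi cs s₀ hM0 (cs.wordProd ω) (z0 (M := M) s₀)) + 1 :=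
          wt_permOf_le s₀ i _
      _ ≤ ω.length + 1 := Nat.add_le_add_right ih 1

lemma length_eq_wt (w : W) : cs.length w = wt (M := M) s₀ (st cs s₀ hM0 w) := by
  apply Nat.le_antisymm
  · conv_lhs => rw [← eval_st cs s₀ hM0 w]
    exact length_eval cs s₀ _
  · obtain ⟨ω, hlen, hw⟩ := cs.exists_reduced_word w⁻¹
    have : st cs s₀ hM0 w = Phi cs s₀ hM0 (cs.wordProd ω) (z0 (M := M) s₀) := by
      rw [st, hw]
    rw [this]
    calc wt (M := M) s₀ _ ≤ ω.length := wt_wordProd_le cs s₀ hM0 ω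
      _ = cs.length w⁻¹ := by rw [hw]; exact hlen.symm
      _ = cs.length w := cs.length_inv w

/-- If the state of `v` satisfies the end-with-`s₀` condition, then the descent set of `v`
is exactly `{s₀}`. -/
lemma descents_eq (v : W) (hc : (st cs s₀ hM0 v).1 = 1 ∧ (st cs s₀ hM0 v).2.1 ≠ []) :
    {t : B | cs.IsRightDescent v t} = {s₀} := by
  ext t
  simp only [Set.mem_setOf_eq, Set.mem_singleton_iff]
  constructor
  · intro hd
    by_contra ht
    have hst : st cs s₀ hM0 (v * cs.simple t)
        = aE ((csres (M := M) s₀).simple ⟨t, ht⟩) (st cs s₀ hM0 v) := by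
      rw [st_mul_simple, permOf, dif_neg ht]
    have hlen : cs.length (v * cs.simple t) = cs.length v + 1 := by
      rw [length_eq_wt cs s₀ hM0, length_eq_wt cs s₀ hM0 v, hst, wt, wt, fZ_aE, fZ, hc.1,
        one_mul, length_simple, length_one]
      omega
    have hd' : cs.length (v * cs.simple t) < cs.length v := hd
    omega
  · intro htt
    rw [htt]
    have hst : st cs s₀ hM0 (v * cs.simple s₀) = bF (st cs s₀ hM0 v) := by
      rw [st_mul_simple, permOf, dif_pos rfl]
      rfl
    have h2 := fZ_bF_pos (csres (M := M) s₀).length (by simp) (st cs s₀ hM0 v) hc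
    show cs.length (v * cs.simple s₀) < cs.length v
    rw [length_eq_wt cs s₀ hM0, length_eq_wt cs s₀ hM0 v, hst, wt, wt]
    omega

end RACGMain

/-- Let `(W,S)` be a right-angled Coxeter system and let `s₀ ∈ S` be such
that `o(s₀ s) = ∞` for every `s ∈ S \ {s₀}`. Then `W^{{s₀}} = {w ∈ W : S(w) = {s₀}}` is
quasi-dense in `W` with respect to the word metric. -/
theorem quasiDense_of_all_infinite_order {B W : Type*} [Finite B] [Group W]
    {M : CoxeterMatrix B} (cs : CoxeterSystem M W)
    (hra : ∀ s t : B, s ≠ t → M s t = 2 ∨ M s t = 0)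
    (s₀ : B) (hs₀ : ∀ s : B, s ≠ s₀ → ¬ IsOfFinOrder (cs.simple s₀ * cs.simple s)) :
    ∃ N : ℕ, 0 < N ∧ ∀ w : W, ∃ v : W,
      {s : B | cs.IsRightDescent v s} = {s₀} ∧ cs.length (w⁻¹ * v) ≤ N := by
  classical
  have hM0 : ∀ t : B, t ≠ s₀ → M s₀ t = 0 := by
    intro t ht
    by_contra h
    exact hs₀ t ht (isOfFinOrder_iff_pow_eq_one.mpr
      ⟨M s₀ t, Nat.pos_of_ne_zero h, cs.simple_mul_simple_pow s₀ t⟩)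
  refine ⟨1, one_pos, fun w => ?_⟩
  by_cases hc : (RACGMain.st cs s₀ hM0 w).1 = 1 ∧ (RACGMain.st cs s₀ hM0 w).2.1 ≠ []
  · refine ⟨w, RACGMain.descents_eq cs s₀ hM0 w hc, ?_⟩
    simp
  · refine ⟨w * cs.simple s₀, ?_, ?_⟩
    · apply RACGMain.descents_eq cs s₀ hM0
      have hst : RACGMain.st cs s₀ hM0 (w * cs.simple s₀)
          = RACGNF.bF (RACGMain.st cs s₀ hM0 w) := by
        rw [RACGMain.st_mul_simple, RACGMain.permOf, dif_pos rfl]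
        rfl
      rw [hst, RACGNF.bF_neg _ hc]
      exact ⟨rfl, by simp⟩
    · rw [inv_mul_cancel_left, cs.length_simple]
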